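/- Let p : ℝⁿ → [1,∞) be measurable, D a cube of radius R, 0 < r ≤ R, and E ⊂ ℝⁿ with |D ∖ E| < (2r)ⁿ and p bounded above on D ∩ E. Then there exists a cube Q* ⊂ D of radius r such that for every positive integer m with mr ≤ R and every cube Q ⊂ D of radius mr, the harmonic mean satisfies p_{Q*∩E} ≤ p_{Q∩E}. -/

import Mathlib

open MeasureTheory ENNReal Set

/-- The (closed) cube `Q(c,r)` with center `c`, radius `r` (side length `2r`),
sides parallel to the coordinate axes. -/
def cube {n : ℕ} (c : Fin n → ℝ) (r : ℝ) : Set (Fin n → ℝ) := {y | ∀ i, |y i - c i| ≤ r}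

/-- The harmonic mean `p_F = (avg_F 1/p)⁻¹` of `p` on `F`. -/
noncomputable def harmMean {n : ℕ} (p : (Fin n → ℝ) → ℝ) (F : Set (Fin n → ℝ)) : ℝ :=
  (⨍ x in F, (p x)⁻¹ ∂volume)⁻¹

/-- The open cube with center `c`, radius `r`. -/
def ocube {n : ℕ} (c : Fin n → ℝ) (r : ℝ) : Set (Fin n → ℝ) := {y | ∀ i, |y i - c i| < r}

lemma cube_eq_Icc {n : ℕ} (c : Fin n → ℝ) (ρ : ℝ) :
    cube c ρ = Icc (fun i => c i - ρ) (fun i => c i + ρ) := by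
  ext y
  simp only [cube, mem_setOf_eq, mem_Icc, Pi.le_def, abs_le]
  constructor
  · intro h; exact ⟨fun i => by linarith [(h i).1], fun i => by linarith [(h i).2]⟩
  · intro h i; exact ⟨by linarith [h.1 i], by linarith [h.2 i]⟩

lemma cube_eq_pi {n : ℕ} (c : Fin n → ℝ) (ρ : ℝ) :
    cube c ρ = Set.pi univ (fun i => Icc (c i - ρ) (c i + ρ)) := by
  ext y
  simp only [cube, mem_setOf_eq, mem_pi, mem_univ, forall_true_left, mem_Icc, abs_le]
  constructor <;> intro h i <;> have := h i <;> constructor <;> linarith [this.1, this.2]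

lemma ocube_eq_pi {n : ℕ} (c : Fin n → ℝ) (ρ : ℝ) :
    ocube c ρ = Set.pi univ (fun i => Ioo (c i - ρ) (c i + ρ)) := by
  ext y
  simp only [ocube, mem_setOf_eq, mem_pi, mem_univ, forall_true_left, mem_Ioo, abs_lt]
  constructor <;> intro h i <;> have := h i <;> constructor <;> linarith [this.1, this.2]

lemma measurableSet_cube {n : ℕ} (c : Fin n → ℝ) (ρ : ℝ) : MeasurableSet (cube c ρ) := by
  rw [cube_eq_Icc]; exact measurableSet_Icc

lemma measurableSet_ocube {n : ℕ} (c : Fin n → ℝ) (ρ : ℝ) : MeasurableSet (ocube c ρ) := by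
  rw [ocube_eq_pi]; exact MeasurableSet.univ_pi (fun i => measurableSet_Ioo)

lemma ocube_subset_cube {n : ℕ} (c : Fin n → ℝ) (ρ : ℝ) : ocube c ρ ⊆ cube c ρ :=
  fun y hy i => le_of_lt (hy i)

lemma volume_cube {n : ℕ} (c : Fin n → ℝ) {ρ : ℝ} (hρ : 0 ≤ ρ) :
    volume (cube c ρ) = ENNReal.ofReal ((2 * ρ) ^ n) := by
  rw [cube_eq_pi, volume_pi_pi]
  simp only [Real.volume_Icc]
  rw [Finset.prod_congr rfl (fun i _ => by ring_nf :
    ∀ i ∈ Finset.univ, ENNReal.ofReal (c i + ρ - (c i - ρ)) = ENNReal.ofReal (2 * ρ))]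
  rw [Finset.prod_const, ← ENNReal.ofReal_pow (by linarith)]
  simp

lemma volume_ocube {n : ℕ} (c : Fin n → ℝ) {ρ : ℝ} (hρ : 0 ≤ ρ) :
    volume (ocube c ρ) = ENNReal.ofReal ((2 * ρ) ^ n) := by
  rw [ocube_eq_pi, volume_pi_pi]
  simp only [Real.volume_Ioo]
  rw [Finset.prod_congr rfl (fun i _ => by ring_nf :
    ∀ i ∈ Finset.univ, ENNReal.ofReal (c i + ρ - (c i - ρ)) = ENNReal.ofReal (2 * ρ))]
  rw [Finset.prod_const, ← ENNReal.ofReal_pow (by linarith)]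
  simp

lemma cube_subset_cube {n : ℕ} {c c' : Fin n → ℝ} {ρ ρ' : ℝ}
    (h : ∀ i, |c i - c' i| ≤ ρ' - ρ) : cube c ρ ⊆ cube c' ρ' := by
  intro y hy i
  have h1 := hy i
  have h2 := h i
  have := abs_sub_le (y i) (c i) (c' i)
  linarith

lemma subset_cube_of_cube_subset {n : ℕ} {c c' : Fin n → ℝ} {ρ ρ' : ℝ} (hρ : 0 ≤ ρ)
    (h : cube c ρ ⊆ cube c' ρ') (i : Fin n) : |c i - c' i| ≤ ρ' - ρ := by
  have h1 : Function.update c i (c i + ρ) ∈ cube c ρ := by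
    intro j
    rcases eq_or_ne j i with rfl | hj
    · simp [abs_of_nonneg hρ, hρ]
    · simp [Function.update_of_ne hj, abs_nonneg, hρ]
  have h2 : Function.update c i (c i - ρ) ∈ cube c ρ := by
    intro j
    rcases eq_or_ne j i with rfl | hj
    · simp [abs_of_nonneg hρ, hρ]
    · simp [Function.update_of_ne hj, abs_nonneg, hρ]
  have g1 := h h1 i
  have g2 := h h2 i
  simp only [Function.update_self] at g1 g2
  rw [abs_le] at g1 g2 ⊢
  constructor <;> [linarith [g2.1]; linarith [g1.2]]

lemma abs_toReal_sub_le {a b c : ℝ≥0∞} (ha : a ≠ ⊤) (hb : b ≠ ⊤) (hc : c ≠ ⊤)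
    (h1 : a ≤ b + c) (h2 : b ≤ a + c) : |a.toReal - b.toReal| ≤ c.toReal := by
  rw [abs_sub_le_iff]
  constructor
  · have := (ENNReal.toReal_le_toReal ha (by finiteness)).2 h1
    rw [ENNReal.toReal_add hb hc] at this
    linarith
  · have := (ENNReal.toReal_le_toReal hb (by finiteness)).2 h2
    rw [ENNReal.toReal_add ha hc] at this
    linarith

lemma cube_subset_iUnion {n m : ℕ} (hm : 0 < m) (z : Fin n → ℝ) {r : ℝ} (hr : 0 < r) :
    cube z ((m : ℝ) * r) ⊆
      ⋃ k : Fin n → Fin m, cube (fun i => z i - m * r + (2 * (k i : ℝ) + 1) * r) r := by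
  intro y hy
  have H : ∀ i, ∃ a : Fin m, |y i - (z i - m * r + (2 * (a : ℝ) + 1) * r)| ≤ r := by
    intro i
    have h := hy i
    rw [abs_le] at h
    set t := (y i - z i + m * r) / (2 * r) with ht
    have ht0 : 0 ≤ t := div_nonneg (by linarith [h.1]) (by linarith)
    have hyt : y i - z i + m * r = 2 * r * t := by
      rw [ht]; field_simp
    by_cases hc : ⌊t⌋₊ ≤ m - 1
    · refine ⟨⟨⌊t⌋₊, by omega⟩, ?_⟩
      have lo : (⌊t⌋₊ : ℝ) ≤ t := Nat.floor_le ht0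
      have hi : t < ⌊t⌋₊ + 1 := Nat.lt_floor_add_one t
      have hcast : ((⌊t⌋₊ : ℕ) : ℝ) ≤ (m : ℝ) - 1 := by
        have : (⌊t⌋₊ : ℕ) ≤ m - 1 := hc
        have h2 : ((⌊t⌋₊ : ℕ) : ℝ) ≤ ((m - 1 : ℕ) : ℝ) := by exact_mod_cast this
        calc ((⌊t⌋₊ : ℕ) : ℝ) ≤ ((m - 1 : ℕ) : ℝ) := h2
          _ ≤ (m : ℝ) - 1 := by
            rw [Nat.cast_sub hm]; simp
      rw [abs_le]
      constructor <;> simp only [Fin.val_mk] <;> nlinarith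
    · refine ⟨⟨m - 1, by omega⟩, ?_⟩
      have hge : (m : ℝ) ≤ t := by
        have h1 : m ≤ ⌊t⌋₊ := by omega
        exact le_trans (by exact_mod_cast Nat.cast_le.2 h1) (Nat.floor_le ht0)
      have hcast : ((m - 1 : ℕ) : ℝ) = (m : ℝ) - 1 := by
        rw [Nat.cast_sub hm]; simp
      rw [abs_le]
      constructor <;> simp only [Fin.val_mk, hcast] <;> nlinarith [h.2]
  choose k hk using H
  exact mem_iUnion.2 ⟨k, hk⟩

lemma ocube_pairwise_disjoint {n m : ℕ} (z : Fin n → ℝ) {r ρ : ℝ} (hr : 0 < r)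
    {k k' : Fin n → Fin m} (hkk : k ≠ k') :
    Disjoint (ocube (fun i => z i - ρ + (2 * (k i : ℝ) + 1) * r) r)
      (ocube (fun i => z i - ρ + (2 * (k' i : ℝ) + 1) * r) r) := by
  obtain ⟨i, hi⟩ := Function.ne_iff.1 hkk
  rw [Set.disjoint_left]
  intro y hy hy'
  have hne : (k i : ℕ) ≠ (k' i : ℕ) := fun h => hi (Fin.ext h)
  have habs : (1 : ℝ) ≤ |(k i : ℝ) - (k' i : ℝ)| := by
    rcases hne.lt_or_gt with h | h
    · have : (k i : ℝ) + 1 ≤ (k' i : ℝ) := by exact_mod_cast h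
      rw [abs_sub_comm, abs_of_nonneg (by linarith)]; linarith
    · have : (k' i : ℝ) + 1 ≤ (k i : ℝ) := by exact_mod_cast h
      rw [abs_of_nonneg (by linarith)]; linarith
  have key : |(2 * (k i : ℝ) + 1) * r - (2 * (k' i : ℝ) + 1) * r| < 2 * r := by
    calc |(2 * (k i : ℝ) + 1) * r - (2 * (k' i : ℝ) + 1) * r|
        = |(y i - (z i - ρ + (2 * (k' i : ℝ) + 1) * r)) - (y i - (z i - ρ + (2 * (k i : ℝ) + 1) * r))| := by
          ring_nf
      _ ≤ |y i - (z i - ρ + (2 * (k' i : ℝ) + 1) * r)| + |y i - (z i - ρ + (2 * (k i : ℝ) + 1) * r)| :=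
          abs_sub _ _
      _ < 2 * r := by linarith [hy i, hy' i]
  have : (2 * r) * |(k i : ℝ) - (k' i : ℝ)| < 2 * r := by
    calc (2 * r) * |(k i : ℝ) - (k' i : ℝ)|
        = |(2 * (k i : ℝ) + 1) * r - (2 * (k' i : ℝ) + 1) * r| := by
          rw [← abs_of_nonneg (by linarith : (0:ℝ) ≤ 2 * r), ← abs_mul]; ring_nf
      _ < 2 * r := key
  nlinarith

theorem stmt9 {n : ℕ} (hn : 0 < n) (p : (Fin n → ℝ) → ℝ)
    (hp : Measurable p) (hp1 : ∀ x, 1 ≤ p x)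
    (x₀ : Fin n → ℝ) (R r : ℝ) (hr : 0 < r) (hrR : r ≤ R)
    (E : Set (Fin n → ℝ)) (hE : MeasurableSet E)
    (hsmall : volume (cube x₀ R \ E) < ENNReal.ofReal ((2 * r) ^ n))
    (M : ℝ) (hbd : ∀ x ∈ cube x₀ R ∩ E, p x ≤ M) :
    ∃ y : Fin n → ℝ, cube y r ⊆ cube x₀ R ∧
      ∀ m : ℕ, 0 < m → (m : ℝ) * r ≤ R →
        ∀ z : Fin n → ℝ, cube z ((m : ℝ) * r) ⊆ cube x₀ R →
          harmMean p (cube y r ∩ E) ≤ harmMean p (cube z ((m : ℝ) * r) ∩ E) := by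
  classical
  have hppos : ∀ x, 0 < p x := fun x => lt_of_lt_of_le one_pos (hp1 x)
  set G : (Fin n → ℝ) → ℝ≥0∞ := fun x => ENNReal.ofReal (p x)⁻¹ with hGdef
  have hG1 : ∀ x, G x ≤ 1 := by
    intro x
    rw [hGdef, ← ENNReal.ofReal_one]
    exact ENNReal.ofReal_le_ofReal (inv_le_one_of_one_le₀ (hp1 x))
  set M' : ℝ := max M 1 with hM'def
  have hM'pos : (0:ℝ) < M' := lt_of_lt_of_le one_pos (le_max_right _ _)
  have hGlb : ∀ x ∈ cube x₀ R ∩ E, ENNReal.ofReal M'⁻¹ ≤ G x := by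
    intro x hx
    refine ENNReal.ofReal_le_ofReal ?_
    have hpM : p x ≤ M' := le_trans (hbd x hx) (le_max_left _ _)
    exact inv_anti₀ (hppos x) hpM
  set J : Set (Fin n → ℝ) → ℝ≥0∞ := fun s => ∫⁻ x in s ∩ E, G x with hJdef
  set V : Set (Fin n → ℝ) → ℝ≥0∞ := fun s => volume (s ∩ E) with hVdef
  have hJleV : ∀ s, J s ≤ V s := by
    intro s
    calc (∫⁻ x in s ∩ E, G x) ≤ ∫⁻ _ in s ∩ E, 1 := lintegral_mono hG1
      _ = volume (s ∩ E) := setLIntegral_one _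
  have hVlev : ∀ (c : Fin n → ℝ) {ρ : ℝ}, 0 ≤ ρ →
      V (cube c ρ) ≤ ENNReal.ofReal ((2 * ρ) ^ n) := by
    intro c ρ hρ
    rw [← volume_cube c hρ]
    exact measure_mono inter_subset_left
  have hVfin : ∀ (c : Fin n → ℝ) {ρ : ℝ}, 0 ≤ ρ → V (cube c ρ) ≠ ⊤ :=
    fun c ρ hρ => ne_top_of_le_ne_top ofReal_ne_top (hVlev c hρ)
  have hJfin : ∀ (c : Fin n → ℝ) {ρ : ℝ}, 0 ≤ ρ → J (cube c ρ) ≠ ⊤ :=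
    fun c ρ hρ => ne_top_of_le_ne_top (hVfin c hρ) (hJleV _)
  have hVpos : ∀ (c : Fin n → ℝ) {ρ : ℝ}, r ≤ ρ → cube c ρ ⊆ cube x₀ R → 0 < V (cube c ρ) := by
    intro c ρ hρ hsub
    have h1 : cube c r ⊆ cube c ρ := cube_subset_cube (fun i => by simp; linarith)
    have h2 : 0 < volume (cube c r ∩ E) := by
      by_contra h
      push_neg at h
      have h0 : volume (cube c r ∩ E) = 0 := le_antisymm h zero_le
      have hsplit : volume (cube c r) ≤ volume (cube c r ∩ E) + volume (cube c r \ E) := by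
        conv_lhs => rw [← Set.inter_union_diff (cube c r) E]
        exact measure_union_le _ _
      have hmono : volume (cube c r \ E) ≤ volume (cube x₀ R \ E) :=
        measure_mono (diff_subset_diff_left (h1.trans hsub))
      rw [h0, zero_add] at hsplit
      have := lt_of_le_of_lt (hsplit.trans hmono) hsmall
      rw [volume_cube c (le_of_lt hr)] at this
      exact lt_irrefl _ this
    exact lt_of_lt_of_le h2 (measure_mono (inter_subset_inter h1 le_rfl))
  have hJpos : ∀ (c : Fin n → ℝ) {ρ : ℝ}, r ≤ ρ → cube c ρ ⊆ cube x₀ R → 0 < J (cube c ρ) := by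
    intro c ρ hρ hsub
    have hlow : ENNReal.ofReal M'⁻¹ * V (cube c ρ) ≤ J (cube c ρ) := by
      rw [hVdef, hJdef, ← setLIntegral_const (cube c ρ ∩ E) (ENNReal.ofReal M'⁻¹)]
      refine setLIntegral_mono (by rw [hGdef]; exact (hp.inv).ennreal_ofReal) ?_
      intro x hx
      exact hGlb x ⟨hsub hx.1, hx.2⟩
    refine lt_of_lt_of_le ?_ hlow
    exact ENNReal.mul_pos (by simp [hM'pos, inv_pos.2 hM'pos, ENNReal.ofReal_pos.2]) (hVpos c hρ hsub).ne'
  have havg : ∀ (c : Fin n → ℝ) (ρ : ℝ),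
      (⨍ x in cube c ρ ∩ E, (p x)⁻¹ ∂volume) = (V (cube c ρ)).toReal⁻¹ * (J (cube c ρ)).toReal := by
    intro c ρ
    rw [setAverage_eq]
    rw [integral_eq_lintegral_of_nonneg_ae
      (Filter.Eventually.of_forall (fun x => inv_nonneg.2 (le_of_lt (hppos x))))
      (hp.inv).aestronglyMeasurable]
    rfl
  -- continuity
  set Iy : (Fin n → ℝ) → ℝ := fun c => (J (cube c r)).toReal with hIydef
  set vy : (Fin n → ℝ) → ℝ := fun c => (V (cube c r)).toReal with hvydef
  -- symmetric-difference bounds for continuity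
  have hincl : ∀ (a b : Fin n → ℝ), dist a b ≤ r →
      cube a r ∩ E ⊆ (cube b r ∩ E) ∪ (cube b (r + dist a b) \ cube b (r - dist a b)) := by
    intro a b hd x hx
    have hdi : ∀ i, |a i - b i| ≤ dist a b := by
      intro i
      have := dist_le_pi_dist a b i
      rwa [Real.dist_eq] at this
    by_cases hxb : x ∈ cube b r
    · exact Or.inl ⟨hxb, hx.2⟩
    · refine Or.inr ⟨cube_subset_cube (fun i => by linarith [hdi i]) hx.1, fun hxs => ?_⟩
      refine hxb (cube_subset_cube (fun i => ?_) hxs)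
      rw [sub_self, abs_zero]
      simpa using dist_nonneg (x := a) (y := b)
  have hSvol : ∀ (b : Fin n → ℝ) (d : ℝ), 0 ≤ d → d ≤ r →
      volume (cube b (r + d) \ cube b (r - d)) =
        ENNReal.ofReal ((2 * (r + d)) ^ n - (2 * (r - d)) ^ n) := by
    intro b d hd0 hdr
    rw [measure_diff (cube_subset_cube (fun i => by rw [sub_self, abs_zero]; linarith))
      (measurableSet_cube b (r - d)).nullMeasurableSet
      (ne_top_of_le_ne_top ofReal_ne_top (le_of_eq (volume_cube b (by linarith))))]
    rw [volume_cube b (by linarith), volume_cube b (by linarith)]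
    rw [ENNReal.ofReal_sub _ (pow_nonneg (by linarith) n)]
  have hwnonneg : ∀ d : ℝ, 0 ≤ d → d ≤ r →
      (2 * (r - d)) ^ n ≤ (2 * (r + d)) ^ n := by
    intro d h0 h1
    exact pow_le_pow_left₀ (by linarith) (by linarith) n
  have hJbound : ∀ u v : Fin n → ℝ, dist u v ≤ r →
      J (cube u r) ≤ J (cube v r) +
        ENNReal.ofReal ((2 * (r + dist u v)) ^ n - (2 * (r - dist u v)) ^ n) := by
    intro u v hd
    rw [← hSvol v (dist u v) dist_nonneg hd]
    calc J (cube u r)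
        ≤ ∫⁻ x in (cube v r ∩ E) ∪ (cube v (r + dist u v) \ cube v (r - dist u v)), G x :=
          lintegral_mono_set (hincl u v hd)
      _ ≤ J (cube v r) + ∫⁻ x in cube v (r + dist u v) \ cube v (r - dist u v), G x :=
          lintegral_union_le _ _ _
      _ ≤ J (cube v r) + volume (cube v (r + dist u v) \ cube v (r - dist u v)) := by
          gcongr
          calc (∫⁻ x in cube v (r + dist u v) \ cube v (r - dist u v), G x)
              ≤ ∫⁻ _ in cube v (r + dist u v) \ cube v (r - dist u v), 1 := lintegral_mono hG1
            _ = _ := setLIntegral_one _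
  have hVbound : ∀ u v : Fin n → ℝ, dist u v ≤ r →
      V (cube u r) ≤ V (cube v r) +
        ENNReal.ofReal ((2 * (r + dist u v)) ^ n - (2 * (r - dist u v)) ^ n) := by
    intro u v hd
    rw [← hSvol v (dist u v) dist_nonneg hd]
    calc V (cube u r)
        ≤ volume ((cube v r ∩ E) ∪ (cube v (r + dist u v) \ cube v (r - dist u v))) :=
          measure_mono (hincl u v hd)
      _ ≤ V (cube v r) + volume (cube v (r + dist u v) \ cube v (r - dist u v)) :=
          measure_union_le _ _
  have hkey : ∀ (f : (Fin n → ℝ) → ℝ),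
      (∀ a b : Fin n → ℝ, dist a b ≤ r →
        |f a - f b| ≤ (2 * (r + dist a b)) ^ n - (2 * (r - dist a b)) ^ n) → Continuous f := by
    intro f hf
    rw [Metric.continuous_iff]
    intro b ε hε
    have hwcont : Filter.Tendsto (fun d : ℝ => (2 * (r + d)) ^ n - (2 * (r - d)) ^ n)
        (nhds 0) (nhds 0) := by
      have hco : Continuous (fun d : ℝ => (2 * (r + d)) ^ n - (2 * (r - d)) ^ n) :=
        ((continuous_const.mul (continuous_const.add continuous_id)).pow n).sub
          ((continuous_const.mul (continuous_const.sub continuous_id)).pow n)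
      have := hco.tendsto 0
      simpa using this
    have hev := hwcont.eventually (gt_mem_nhds hε)
    rw [Metric.eventually_nhds_iff] at hev
    obtain ⟨δ, hδ, hδε⟩ := hev
    refine ⟨min δ r, lt_min hδ hr, fun a ha => ?_⟩
    have hd1 : dist a b < δ := lt_of_lt_of_le ha (min_le_left _ _)
    have hd2 : dist a b ≤ r := le_of_lt (lt_of_lt_of_le ha (min_le_right _ _))
    have hw : (2 * (r + dist a b)) ^ n - (2 * (r - dist a b)) ^ n < ε := by
      refine hδε ?_
      rw [Real.dist_eq, sub_zero, abs_of_nonneg dist_nonneg]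
      exact hd1
    calc dist (f a) (f b) = |f a - f b| := Real.dist_eq _ _
      _ ≤ (2 * (r + dist a b)) ^ n - (2 * (r - dist a b)) ^ n := hf a b hd2
      _ < ε := hw
  have hIc : Continuous Iy := by
    refine hkey Iy ?_
    intro a b hd
    have hba : dist b a = dist a b := dist_comm b a
    have h2 := hJbound b a (by rwa [hba])
    rw [hba] at h2
    have h := abs_toReal_sub_le (hJfin a (le_of_lt hr)) (hJfin b (le_of_lt hr)) ofReal_ne_top
      (hJbound a b hd) h2
    rwa [ENNReal.toReal_ofReal (by linarith [hwnonneg (dist a b) dist_nonneg hd])] at h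
  have hvc : Continuous vy := by
    refine hkey vy ?_
    intro a b hd
    have hba : dist b a = dist a b := dist_comm b a
    have h2 := hVbound b a (by rwa [hba])
    rw [hba] at h2
    have h := abs_toReal_sub_le (hVfin a (le_of_lt hr)) (hVfin b (le_of_lt hr)) ofReal_ne_top
      (hVbound a b hd) h2
    rwa [ENNReal.toReal_ofReal (by linarith [hwnonneg (dist a b) dist_nonneg hd])] at h

  -- compact maximization
  set K : Set (Fin n → ℝ) := cube x₀ (R - r) with hKdef
  have hKsub : ∀ c ∈ K, cube c r ⊆ cube x₀ R := by
    intro c hc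
    exact cube_subset_cube (fun i => by simpa [_root_.sub_sub_cancel] using hc i)
  have hKmem : ∀ c : Fin n → ℝ, cube c r ⊆ cube x₀ R → c ∈ K := by
    intro c hc i
    exact subset_cube_of_cube_subset (le_of_lt hr) hc i
  have hKcomp : IsCompact K := by
    rw [hKdef, cube_eq_Icc]; exact isCompact_Icc
  have hKne : K.Nonempty := ⟨x₀, fun i => by simpa using by linarith⟩
  have hvKpos : ∀ c ∈ K, 0 < vy c := by
    intro c hc
    rw [hvydef]
    exact ENNReal.toReal_pos (hVpos c le_rfl (hKsub c hc)).ne' (hVfin c (le_of_lt hr))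
  set F : (Fin n → ℝ) → ℝ := fun c => (vy c)⁻¹ * Iy c with hFdef
  have hFcont : ContinuousOn F K := by
    exact ContinuousOn.mul
      (ContinuousOn.inv₀ hvc.continuousOn (fun c hc => (hvKpos c hc).ne'))
      hIc.continuousOn
  obtain ⟨y, hyK, hymax⟩ := hKcomp.exists_isMaxOn hKne hFcont
  refine ⟨y, hKsub y hyK, ?_⟩
  intro m hm hmR z hz
  set ρ : ℝ := (m : ℝ) * r with hρdef
  have hm1 : (1:ℝ) ≤ (m : ℝ) := by exact_mod_cast hm
  have hρr : r ≤ ρ := by rw [hρdef]; nlinarith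
  have hρ0 : 0 ≤ ρ := by linarith
  set c_ : (Fin n → Fin m) → (Fin n → ℝ) := fun k i => z i - ρ + (2 * (k i : ℝ) + 1) * r
    with hcdef
  have hsubk : ∀ k, cube (c_ k) r ⊆ cube z ρ := by
    intro k
    refine cube_subset_cube (fun i => ?_)
    have h1 : (0:ℝ) ≤ (k i : ℝ) := Nat.cast_nonneg _
    have h2 : ((k i : ℕ) : ℝ) + 1 ≤ (m : ℝ) := by exact_mod_cast (k i).is_lt
    rw [hcdef]
    simp only []
    rw [abs_le]
    constructor <;> rw [hρdef] <;> nlinarith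
  have hsubkD : ∀ k, cube (c_ k) r ⊆ cube x₀ R := fun k => (hsubk k).trans hz
  have hkK : ∀ k, c_ k ∈ K := fun k => hKmem _ (hsubkD k)
  have hcover : cube z ρ ∩ E ⊆ ⋃ k : Fin n → Fin m, (cube (c_ k) r ∩ E) := by
    intro x hx
    have hcov := cube_subset_iUnion hm z hr hx.1
    rw [mem_iUnion] at hcov ⊢
    obtain ⟨k, hk⟩ := hcov
    refine ⟨k, ⟨?_, hx.2⟩⟩
    rw [hcdef]
    convert hk using 3
  have hV_k_le : ∀ k, V (cube (c_ k) r) ≤ volume (ocube (c_ k) r ∩ E) := by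
    intro k
    have hnull : volume (cube (c_ k) r \ ocube (c_ k) r) = 0 := by
      rw [measure_diff (ocube_subset_cube _ _) (measurableSet_ocube _ _).nullMeasurableSet
        (by rw [volume_ocube _ hr.le]; exact ofReal_ne_top)]
      rw [volume_cube _ hr.le, volume_ocube _ hr.le, tsub_self]
    calc V (cube (c_ k) r)
        ≤ volume ((ocube (c_ k) r ∩ E) ∪ (cube (c_ k) r \ ocube (c_ k) r)) := by
          refine measure_mono ?_
          intro x hx
          by_cases hxo : x ∈ ocube (c_ k) r
          · exact Or.inl ⟨hxo, hx.2⟩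
          · exact Or.inr ⟨hx.1, hxo⟩
      _ ≤ volume (ocube (c_ k) r ∩ E) + volume (cube (c_ k) r \ ocube (c_ k) r) :=
          measure_union_le _ _
      _ = volume (ocube (c_ k) r ∩ E) := by rw [hnull, add_zero]
  have hdisj : (↑(Finset.univ : Finset (Fin n → Fin m)) : Set (Fin n → Fin m)).PairwiseDisjoint
      (fun k => ocube (c_ k) r ∩ E) := by
    intro k _ k' _ hkk
    exact Disjoint.mono inter_subset_left inter_subset_left
      (ocube_pairwise_disjoint z hr hkk)
  have hsumV : ∑ k : Fin n → Fin m, V (cube (c_ k) r) ≤ V (cube z ρ) := by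
    calc ∑ k : Fin n → Fin m, V (cube (c_ k) r)
        ≤ ∑ k : Fin n → Fin m, volume (ocube (c_ k) r ∩ E) :=
          Finset.sum_le_sum (fun k _ => hV_k_le k)
      _ = volume (⋃ k ∈ (Finset.univ : Finset (Fin n → Fin m)), (ocube (c_ k) r ∩ E)) :=
          (measure_biUnion_finset hdisj (fun k _ => (measurableSet_ocube _ _).inter hE)).symm
      _ ≤ V (cube z ρ) := by
          refine measure_mono (iUnion₂_subset fun k _ => ?_)
          exact inter_subset_inter ((ocube_subset_cube _ _).trans (hsubk k)) le_rfl
  have hJQ : J (cube z ρ) ≤ ∑ k : Fin n → Fin m, J (cube (c_ k) r) := by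
    calc J (cube z ρ) ≤ ∫⁻ x in ⋃ k : Fin n → Fin m, (cube (c_ k) r ∩ E), G x :=
          lintegral_mono_set hcover
      _ ≤ ∑' k : Fin n → Fin m, J (cube (c_ k) r) := lintegral_iUnion_le _ _
      _ = ∑ k : Fin n → Fin m, J (cube (c_ k) r) := tsum_fintype _
  set A : ℝ := F y with hA
  have hA0 : 0 ≤ A := mul_nonneg (inv_nonneg.2 ENNReal.toReal_nonneg) ENNReal.toReal_nonneg
  have hstep2 : ∀ k, Iy (c_ k) ≤ A * vy (c_ k) := by
    intro k
    have h := isMaxOn_iff.1 hymax (c_ k) (hkK k)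
    have hvpos := hvKpos _ (hkK k)
    rw [hFdef] at h
    simp only at h
    have hvy : vy (c_ k) * (vy (c_ k))⁻¹ = 1 := mul_inv_cancel₀ hvpos.ne'
    have hAeq : A = (vy y)⁻¹ * Iy y := by rw [hA, hFdef]
    have h' : (vy (c_ k))⁻¹ * Iy (c_ k) ≤ A := by rw [hAeq]; exact h
    calc Iy (c_ k) = vy (c_ k) * ((vy (c_ k))⁻¹ * Iy (c_ k)) := by
          rw [← mul_assoc, hvy, one_mul]
      _ ≤ vy (c_ k) * A := mul_le_mul_of_nonneg_left h' hvpos.le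
      _ = A * vy (c_ k) := mul_comm _ _
  have hsumJfin : (∑ k : Fin n → Fin m, J (cube (c_ k) r)) ≠ ⊤ := by
    refine (lt_top_iff_ne_top).1 ?_
    rw [ENNReal.sum_lt_top]
    exact fun k _ => (hJfin _ hr.le).lt_top
  have hsumVfin : (∑ k : Fin n → Fin m, V (cube (c_ k) r)) ≠ ⊤ := by
    refine (lt_top_iff_ne_top).1 ?_
    rw [ENNReal.sum_lt_top]
    exact fun k _ => (hVfin _ hr.le).lt_top
  have hkeyR : (J (cube z ρ)).toReal ≤ A * (V (cube z ρ)).toReal := by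
    calc (J (cube z ρ)).toReal
        ≤ (∑ k : Fin n → Fin m, J (cube (c_ k) r)).toReal :=
          (ENNReal.toReal_le_toReal (hJfin z hρ0) hsumJfin).2 hJQ
      _ = ∑ k : Fin n → Fin m, Iy (c_ k) := ENNReal.toReal_sum (fun k _ => hJfin _ hr.le)
      _ ≤ ∑ k : Fin n → Fin m, A * vy (c_ k) := Finset.sum_le_sum (fun k _ => hstep2 k)
      _ = A * ∑ k : Fin n → Fin m, vy (c_ k) := by rw [← Finset.mul_sum]
      _ = A * (∑ k : Fin n → Fin m, V (cube (c_ k) r)).toReal := by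
          rw [ENNReal.toReal_sum (fun k _ => hVfin _ hr.le)]
      _ ≤ A * (V (cube z ρ)).toReal := by
          refine mul_le_mul_of_nonneg_left ?_ hA0
          exact (ENNReal.toReal_le_toReal hsumVfin (hVfin z hρ0)).2 hsumV
  have hVQtr : 0 < (V (cube z ρ)).toReal :=
    ENNReal.toReal_pos (hVpos z hρr hz).ne' (hVfin z hρ0)
  have hJQtr : 0 < (J (cube z ρ)).toReal :=
    ENNReal.toReal_pos (hJpos z hρr hz).ne' (hJfin z hρ0)
  have havgQpos : 0 < (V (cube z ρ)).toReal⁻¹ * (J (cube z ρ)).toReal :=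
    mul_pos (inv_pos.2 hVQtr) hJQtr
  have havgQle : (V (cube z ρ)).toReal⁻¹ * (J (cube z ρ)).toReal ≤ A := by
    rw [inv_mul_le_iff₀ hVQtr]
    linarith [hkeyR]
  rw [harmMean, harmMean, havg y r, havg z ρ]
  exact inv_anti₀ havgQpos havgQle
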